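/- For all x ≥ 0, the standard normal tail satisfies (1/(√(2π)(1+x))) · e^{-x²/2} ≤ 1 - Φ(x) ≤ (1/(√π·(1+x))) · e^{-x²/2}, where Φ is the standard normal CDF. -/

import Mathlib

open Real MeasureTheory Set Filter

noncomputable def stdNormalCDF (x : ℝ) : ℝ :=
  ∫ t in Set.Iic x, (Real.sqrt (2 * Real.pi))⁻¹ * Real.exp (-t ^ 2 / 2)

lemma gauss_int : Integrable (fun t : ℝ => Real.exp (-t ^ 2 / 2)) := by
  have := integrable_exp_neg_mul_sq (b := 1/2) (by norm_num)
  convert this using 2 with t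
  ring_nf

lemma gauss_total : ∫ t : ℝ, Real.exp (-t ^ 2 / 2) = Real.sqrt (2 * Real.pi) := by
  have := integral_gaussian (1/2)
  rw [show π / (1/2 : ℝ) = 2 * π by ring] at this
  rw [← this]
  congr 1 with t
  ring_nf

lemma ftc_lem (x : ℝ) (hx : 0 ≤ x) :
    ∫ t in Ioi x, Real.exp (-t ^ 2 / 2) * ((t ^ 2 + t + 1) / (1 + t) ^ 2)
      = Real.exp (-x ^ 2 / 2) / (1 + x) := by
  have hpos : ∀ t : ℝ, x ≤ t → (0:ℝ) < 1 + t := fun t ht => by linarith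
  have hderiv : ∀ t ∈ Ici x, HasDerivAt (fun t => -(Real.exp (-t ^ 2 / 2) / (1 + t)))
      (Real.exp (-t ^ 2 / 2) * ((t ^ 2 + t + 1) / (1 + t) ^ 2)) t := by
    intro t ht
    have h1 : HasDerivAt (fun t : ℝ => -t ^ 2 / 2) (-t) t := by
      have := (hasDerivAt_pow 2 t).neg.div_const 2
      simpa using this.congr_deriv (by push_cast; ring)
    have h2 : HasDerivAt (fun t : ℝ => Real.exp (-t ^ 2 / 2)) (-t * Real.exp (-t ^ 2 / 2)) t := by
      simpa [mul_comm] using h1.exp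
    have h3 : HasDerivAt (fun t : ℝ => 1 + t) 1 t := by
      simpa using (hasDerivAt_id t).const_add 1
    have hne : (1 + t) ≠ 0 := (hpos t ht).ne'
    have := (h2.div h3 hne).neg
    refine this.congr_deriv ?_
    ring
  have hbound : ∀ t ∈ Ioi x,
      ‖Real.exp (-t ^ 2 / 2) * ((t ^ 2 + t + 1) / (1 + t) ^ 2)‖ ≤ Real.exp (-t ^ 2 / 2) := by
    intro t ht
    have ht' : x ≤ t := le_of_lt ht
    have h0 : (0:ℝ) < 1 + t := hpos t ht'
    have hq : (t ^ 2 + t + 1) / (1 + t) ^ 2 ≤ 1 := by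
      rw [div_le_one (by positivity)]
      nlinarith
    have hnn : (0:ℝ) ≤ t ^ 2 + t + 1 := by nlinarith
    rw [Real.norm_eq_abs, abs_of_nonneg
      (mul_nonneg (Real.exp_pos _).le (div_nonneg hnn (sq_nonneg _)))]
    nlinarith [Real.exp_pos (-t ^ 2 / 2)]
  have hint : IntegrableOn (fun t => Real.exp (-t ^ 2 / 2) * ((t ^ 2 + t + 1) / (1 + t) ^ 2))
      (Ioi x) := by
    refine Integrable.mono (gauss_int.integrableOn)
      (Measurable.aestronglyMeasurable (by fun_prop)) ?_
    filter_upwards [ae_restrict_mem measurableSet_Ioi] with t ht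
    exact le_trans (hbound t ht) (Real.norm_eq_abs _ ▸ le_abs_self _)
  have htend : Tendsto (fun t => -(Real.exp (-t ^ 2 / 2) / (1 + t))) atTop (nhds 0) := by
    have h1 : Tendsto (fun t : ℝ => Real.exp (-t ^ 2 / 2)) atTop (nhds 0) := by
      apply Real.tendsto_exp_atBot.comp
      apply Filter.Tendsto.atBot_div_const (by norm_num)
      exact tendsto_neg_atBot_iff.mpr (tendsto_pow_atTop (by norm_num))
    have h2 : Tendsto (fun t : ℝ => (1 + t)⁻¹) atTop (nhds 0) := by
      apply Tendsto.inv_tendsto_atTop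
      exact tendsto_atTop_add_const_left _ 1 tendsto_id
    have := (h1.mul h2).neg
    simpa [div_eq_mul_inv] using this
  have := integral_Ioi_of_hasDerivAt_of_tendsto' hderiv hint htend
  rw [this]
  ring

theorem stmt_0 (x : ℝ) (hx : 0 ≤ x) :
    (Real.sqrt (2 * Real.pi) * (1 + x))⁻¹ * Real.exp (-x ^ 2 / 2)
      ≤ 1 - stdNormalCDF x ∧
    1 - stdNormalCDF x
      ≤ (Real.sqrt Real.pi * (1 + x))⁻¹ * Real.exp (-x ^ 2 / 2) := by
  have hs : (0:ℝ) < Real.sqrt (2 * π) := Real.sqrt_pos.mpr (by positivity)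
  have h1x : (0:ℝ) < 1 + x := by linarith
  -- tail representation
  have hIic : IntegrableOn (fun t => Real.exp (-t ^ 2 / 2)) (Iic x) := gauss_int.integrableOn
  have hIoi : IntegrableOn (fun t => Real.exp (-t ^ 2 / 2)) (Ioi x) := gauss_int.integrableOn
  have hsplit : stdNormalCDF x + (Real.sqrt (2 * π))⁻¹ * ∫ t in Ioi x, Real.exp (-t ^ 2 / 2) = 1 := by
    unfold stdNormalCDF
    rw [integral_const_mul, ← mul_add, intervalIntegral.integral_Iic_add_Ioi hIic hIoi, gauss_total,
      inv_mul_cancel₀ hs.ne']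
  have htail : 1 - stdNormalCDF x = (Real.sqrt (2 * π))⁻¹ * ∫ t in Ioi x, Real.exp (-t ^ 2 / 2) := by
    linarith
  set h : ℝ → ℝ := fun t => Real.exp (-t ^ 2 / 2) * ((t ^ 2 + t + 1) / (1 + t) ^ 2) with hh
  have hint : IntegrableOn h (Ioi x) := by
    refine Integrable.mono (gauss_int.integrableOn)
      (Measurable.aestronglyMeasurable (by fun_prop)) ?_
    filter_upwards [ae_restrict_mem measurableSet_Ioi] with t ht
    have ht' : x ≤ t := le_of_lt ht
    have h0 : (0:ℝ) < 1 + t := by linarith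
    have hq : (t ^ 2 + t + 1) / (1 + t) ^ 2 ≤ 1 := by
      rw [div_le_one (by positivity)]; nlinarith
    have hnn : (0:ℝ) ≤ t ^ 2 + t + 1 := by nlinarith
    rw [hh, Real.norm_eq_abs, abs_of_nonneg
      (mul_nonneg (Real.exp_pos _).le (div_nonneg hnn (sq_nonneg _))),
      Real.norm_eq_abs, abs_of_nonneg (Real.exp_pos _).le]
    nlinarith [Real.exp_pos (-t ^ 2 / 2)]
  have hftc : ∫ t in Ioi x, h t = Real.exp (-x ^ 2 / 2) / (1 + x) := ftc_lem x hx
  have hlow : Real.exp (-x ^ 2 / 2) / (1 + x) ≤ ∫ t in Ioi x, Real.exp (-t ^ 2 / 2) := by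
    rw [← hftc]
    apply setIntegral_mono_on hint hIoi measurableSet_Ioi
    intro t ht
    have ht' : x ≤ t := le_of_lt ht
    have h0 : (0:ℝ) < 1 + t := by linarith
    have hq : (t ^ 2 + t + 1) / (1 + t) ^ 2 ≤ 1 := by
      rw [div_le_one (by positivity)]; nlinarith
    rw [hh]
    nlinarith [Real.exp_pos (-t ^ 2 / 2)]
  have hupp : ∫ t in Ioi x, Real.exp (-t ^ 2 / 2)
      ≤ Real.sqrt 2 * (Real.exp (-x ^ 2 / 2) / (1 + x)) := by
    rw [← hftc, ← integral_const_mul]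
    apply setIntegral_mono_on hIoi (hint.const_mul _) measurableSet_Ioi
    intro t ht
    have ht' : x ≤ t := le_of_lt ht
    have h0 : (0:ℝ) < 1 + t := by linarith
    have hs2 : Real.sqrt 2 ^ 2 = 2 := Real.sq_sqrt (by norm_num)
    have hs2' : (1:ℝ) ≤ Real.sqrt 2 := by nlinarith [Real.sqrt_nonneg 2]
    have key : (1 + t) ^ 2 ≤ Real.sqrt 2 * (t ^ 2 + t + 1) := by
      nlinarith [sq_nonneg (t - Real.sqrt 2 / 2), Real.sqrt_nonneg 2]
    rw [hh]
    rw [show Real.sqrt 2 * (Real.exp (-t ^ 2 / 2) * ((t ^ 2 + t + 1) / (1 + t) ^ 2))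
        = Real.exp (-t ^ 2 / 2) * (Real.sqrt 2 * (t ^ 2 + t + 1) / (1 + t) ^ 2) by ring]
    have : (1:ℝ) ≤ Real.sqrt 2 * (t ^ 2 + t + 1) / (1 + t) ^ 2 := by
      rw [le_div_iff₀ (by positivity)]; linarith
    nlinarith [Real.exp_pos (-t ^ 2 / 2)]
  rw [htail]
  have hsqrt2pi : Real.sqrt (2 * π) = Real.sqrt 2 * Real.sqrt π := Real.sqrt_mul (by norm_num) _
  have hsp : (0:ℝ) < Real.sqrt π := Real.sqrt_pos.mpr pi_pos
  have hs2pos : (0:ℝ) < Real.sqrt 2 := by positivity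
  constructor
  · rw [mul_inv]
    calc (Real.sqrt (2*π))⁻¹ * (1+x)⁻¹ * Real.exp (-x^2/2)
        = (Real.sqrt (2*π))⁻¹ * (Real.exp (-x^2/2) / (1+x)) := by ring
      _ ≤ (Real.sqrt (2*π))⁻¹ * ∫ t in Ioi x, Real.exp (-t^2/2) := by
          apply mul_le_mul_of_nonneg_left hlow (by positivity)
  · calc (Real.sqrt (2*π))⁻¹ * ∫ t in Ioi x, Real.exp (-t^2/2)
        ≤ (Real.sqrt (2*π))⁻¹ * (Real.sqrt 2 * (Real.exp (-x^2/2) / (1+x))) := by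
          apply mul_le_mul_of_nonneg_left hupp (by positivity)
      _ = (Real.sqrt π * (1+x))⁻¹ * Real.exp (-x^2/2) := by
          rw [hsqrt2pi]
          field_simp
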